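/- Let t₁ < t₂ < ... < t_N be distinct times with N ≥ n+2, and ρ : ℝ → ℝ^3 any function. The stacked matrix à with block rows [I, t_iI, ..., t_iⁿI, ρ(t_i)], i = 1..N, has full column rank 3n+4 if and only if ρ restricted to {t₁,...,t_N} is not equal to the restriction of any ℝ^3-valued polynomial of degree ≤ n. -/

import Mathlib

open Matrix

lemma sum3r (m : ℕ) (h : ℕ → ℝ) :
    ∑ i ∈ Finset.range (3*m), h i
      = ∑ j ∈ Finset.range m, (h (3*j) + h (3*j+1) + h (3*j+2)) := by
  induction m with
  | zero => simp
  | succ m ih =>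
    rw [Finset.sum_range_succ, ← ih, show 3*(m+1) = 3*m+1+1+1 by ring,
      Finset.sum_range_succ, Finset.sum_range_succ, Finset.sum_range_succ]
    ring_nf

lemma fin_sum_decomp (n : ℕ) (f : Fin (3*n+4) → ℝ) :
    ∑ c, f c
      = (∑ j : Fin (n+1),
          (f ⟨3*(j:ℕ), by have := j.isLt; omega⟩
            + f ⟨3*(j:ℕ)+1, by have := j.isLt; omega⟩
            + f ⟨3*(j:ℕ)+2, by have := j.isLt; omega⟩))
        + f ⟨3*n+3, by omega⟩ := by
  set F : ℕ → ℝ := fun c => if h : c < 3*n+4 then f ⟨c, h⟩ else 0 with hF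
  have h1 : ∑ c, f c = ∑ c ∈ Finset.range (3*n+4), F c := by
    rw [← Fin.sum_univ_eq_sum_range]
    exact Finset.sum_congr rfl fun c _ => by simp [hF, c.isLt]
  have h2 : ∑ c ∈ Finset.range (3*n+4), F c
      = ∑ c ∈ Finset.range (3*(n+1)), F c + F (3*n+3) := by
    rw [show (3*n+4) = 3*(n+1)+1 by ring, Finset.sum_range_succ,
      show 3*(n+1) = 3*n+3 by ring]
  rw [h1, h2, sum3r,
    ← Fin.sum_univ_eq_sum_range (fun j => F (3*j) + F (3*j+1) + F (3*j+2))]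
  congr 1
  · exact Finset.sum_congr rfl fun j _ => by
      have := j.isLt
      simp only [hF]
      rw [dif_pos (by omega), dif_pos (by omega), dif_pos (by omega)]
  · simp [hF]

def idx3 (n : ℕ) (j : Fin (n+1)) (k : Fin 3) : Fin (3*n+4) :=
  ⟨3*(j:ℕ)+(k:ℕ), by have := j.isLt; have := k.isLt; omega⟩

def lastc (n : ℕ) : Fin (3*n+4) := ⟨3*n+3, by omega⟩


/-- Sufficiency condition for Theorem 2: for distinct times `t₁ < ⋯ < t_N`
with `N ≥ n+2`, the stacked matrix `Ã` with block rows
`[I, tᵢI, …, tᵢⁿI, ρ(tᵢ)]` has full column rank `3n+4` if and only if `ρ`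
restricted to `{t₁,…,t_N}` does not coincide with any `ℝ³`-valued polynomial
of degree at most `n`. -/
theorem stacked_matrix_full_rank_iff_not_polynomial
    (n N : ℕ) (hN : n + 2 ≤ N) (t : Fin N → ℝ) (ht : StrictMono t)
    (ρ : ℝ → Fin 3 → ℝ)
    (A : Matrix (Fin N × Fin 3) (Fin (3 * n + 4)) ℝ)
    (hA : A = Matrix.of fun (p : Fin N × Fin 3) (c : Fin (3 * n + 4)) =>
      if (c : ℕ) < 3 * n + 3 then
        (if (c : ℕ) % 3 = (p.2 : ℕ) then (t p.1) ^ ((c : ℕ) / 3) else 0)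
      else ρ (t p.1) p.2) :
    A.rank = 3 * n + 4 ↔
      ¬∃ p : Fin (n + 1) → Fin 3 → ℝ,
        ∀ i : Fin N, ρ (t i) = ∑ j : Fin (n + 1), (t i) ^ (j : ℕ) • p j := by
  have hAe : ∀ (p : Fin N × Fin 3) (c : Fin (3*n+4)), A p c =
      if (c : ℕ) < 3 * n + 3 then
        (if (c : ℕ) % 3 = (p.2 : ℕ) then (t p.1) ^ ((c : ℕ) / 3) else 0)
      else ρ (t p.1) p.2 := by
    intro p c; rw [hA]; rfl
  -- key pointwise computation of a linear combination of columns
  have key : ∀ (g : Fin (3*n+4) → ℝ) (i : Fin N) (k : Fin 3),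
      ∑ c, g c * A (i,k) c
        = (∑ j : Fin (n+1), g (idx3 n j k) * t i ^ (j:ℕ))
          + g (lastc n) * ρ (t i) k := by
    intro g i k
    rw [fin_sum_decomp n (fun c => g c * A (i,k) c)]
    congr 1
    · apply Finset.sum_congr rfl
      intro j _
      have hj := j.isLt
      have hk := k.isLt
      have h0 : (3*(j:ℕ)) % 3 = 0 := by omega
      have h0' : (3*(j:ℕ)) / 3 = (j:ℕ) := by omega
      have h1 : (3*(j:ℕ)+1) % 3 = 1 := by omega
      have h1' : (3*(j:ℕ)+1) / 3 = (j:ℕ) := by omega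
      have h2 : (3*(j:ℕ)+2) % 3 = 2 := by omega
      have h2' : (3*(j:ℕ)+2) / 3 = (j:ℕ) := by omega
      have l0 : 3*(j:ℕ) < 3*n+3 := by omega
      have l1 : 3*(j:ℕ)+1 < 3*n+3 := by omega
      have l2 : 3*(j:ℕ)+2 < 3*n+3 := by omega
      rw [hAe, hAe, hAe]
      simp only [Fin.val_mk, h0, h0', h1, h1', h2, h2', l0, l1, l2, if_true]
      fin_cases k <;> simp [idx3]
    · rw [hAe]
      simp [lastc]
  have hz : ∀ g : Fin (3*n+4) → ℝ,
      (∑ c, g c • A.col c = 0) ↔ ∀ (i : Fin N) (k : Fin 3), ∑ c, g c * A (i,k) c = 0 := by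
    intro g
    constructor
    · intro h i k
      have := congrFun h (i,k)
      simpa [Finset.sum_apply, Matrix.col_apply] using this
    · intro h
      funext p
      obtain ⟨i,k⟩ := p
      simpa [Finset.sum_apply, Matrix.col_apply] using h i k
  have hr : A.rank = 3*n+4 ↔ LinearIndependent ℝ A.col := by
    rw [Matrix.rank_eq_finrank_span_cols, linearIndependent_iff_card_eq_finrank_span,
      Set.finrank, Fintype.card_fin, eq_comm]
  rw [hr, Fintype.linearIndependent_iff]
  constructor
  · rintro hind ⟨p, hp⟩
    set g : Fin (3*n+4) → ℝ := fun c =>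
      if h : (c:ℕ) < 3*n+3 then
        -(p ⟨(c:ℕ)/3, by have := c.isLt; omega⟩ ⟨(c:ℕ)%3, by omega⟩) else 1 with hgdef
    have hl : g (lastc n) = 1 := by
      simp only [hgdef, lastc]
      rw [dif_neg (by omega)]
    have hg0 : ∑ c, g c • A.col c = 0 := by
      rw [hz g]
      intro i k
      rw [key g i k]
      have hidx : ∀ j : Fin (n+1), g (idx3 n j k) = -(p j k) := by
        intro j
        have hj := j.isLt
        have hk := k.isLt
        have d1 : (3*(j:ℕ)+(k:ℕ))/3 = (j:ℕ) := by omega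
        have d2 : (3*(j:ℕ)+(k:ℕ))%3 = (k:ℕ) := by omega
        simp only [hgdef, idx3, Fin.val_mk]
        rw [dif_pos (by omega)]
        simp only [Fin.val_mk, d1, d2, Fin.eta]
      have hρ : ρ (t i) k = ∑ j : Fin (n+1), t i ^ (j:ℕ) * p j k := by
        have := congrFun (hp i) k
        simpa [Finset.sum_apply] using this
      rw [hl, hρ, one_mul]
      simp only [hidx]
      rw [← Finset.sum_add_distrib]
      apply Finset.sum_eq_zero
      intro j _
      ring
    have := hind g hg0 (lastc n)
    rw [hl] at this
    exact one_ne_zero this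
  · intro hnp g hg0
    have hrow := (hz g).mp hg0
    have hik : ∀ (i : Fin N) (k : Fin 3),
        (∑ j : Fin (n+1), g (idx3 n j k) * t i ^ (j:ℕ)) + g (lastc n) * ρ (t i) k = 0 := by
      intro i k
      rw [← key g i k]
      exact hrow i k
    have hgl : g (lastc n) = 0 := by
      by_contra hne
      apply hnp
      refine ⟨fun j k => -(g (idx3 n j k)) / g (lastc n), ?_⟩
      intro i
      funext k
      have h := hik i k
      have hsum : ∑ j : Fin (n+1), t i ^ (j:ℕ) * (-(g (idx3 n j k)) / g (lastc n))
          = (∑ j : Fin (n+1), g (idx3 n j k) * t i ^ (j:ℕ)) * (-1 / g (lastc n)) := by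
        rw [Finset.sum_mul]
        apply Finset.sum_congr rfl
        intro j _
        ring
      have : ρ (t i) k = ∑ j : Fin (n+1), t i ^ (j:ℕ) * (-(g (idx3 n j k)) / g (lastc n)) := by
        rw [hsum]
        have hS : ∑ j : Fin (n+1), g (idx3 n j k) * t i ^ (j:ℕ)
            = -(g (lastc n) * ρ (t i) k) := by linarith
        rw [hS]
        field_simp
      rw [this]
      simp [Finset.sum_apply]
    have hzero : ∀ (k : Fin 3) (j : Fin (n+1)), g (idx3 n j k) = 0 := by
      intro k
      have hinj : Function.Injective
          (fun j : Fin (n+1) => t (Fin.castLE (by omega) j)) := by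
        intro a b hab
        exact Fin.castLE_injective _ (ht.injective hab)
      have hv : ∀ j : Fin (n+1),
          ∑ i : Fin (n+1), g (idx3 n i k) * (t (Fin.castLE (by omega) j)) ^ (i:ℕ) = 0 := by
        intro j
        have := hik (Fin.castLE (by omega) j) k
        rw [hgl] at this
        linarith
      have := Matrix.eq_zero_of_forall_index_sum_mul_pow_eq_zero hinj hv
      intro j
      exact congrFun this j
    intro c
    rcases lt_or_ge (c:ℕ) (3*n+3) with hc | hc
    · have hceq : c = idx3 n ⟨(c:ℕ)/3, by omega⟩ ⟨(c:ℕ)%3, by omega⟩ := by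
        apply Fin.ext
        simp only [idx3]
        omega
      rw [hceq]
      exact hzero _ _
    · have hceq : c = lastc n := by
        apply Fin.ext
        have := c.isLt
        simp only [lastc]
        omega
      rw [hceq]
      exact hgl
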